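/- Let G be a genome over alphabet Σ, let c be a CNP on Σ, and let s ∈ Σ. Then d_GCNP(G − s, c − s) ≤ d_GCNP(G, c), where G − s is the subsequence of G obtained by removing all occurrences of s and c − s is the CNP obtained from c by setting its value at s to 0. (In particular, if some event sequence of length k transforms G into a genome with CNP c, then some event sequence of length at most k transforms G − s into a genome with CNP c − s.) -/

import Mathlib

/-- An event is either a deletion `del i j` (removing the substring from position `i`
to position `j`, 1-based) or a duplication `dup i j p` (copying the substring from
position `i` to position `j` and inserting the copy after position `p`). -/
inductive GEvent where
  | del (i j : ℕ)
  | dup (i j p : ℕ)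
deriving DecidableEq

/-- Applying an event to a genome (a list of characters). -/
def applyEvent {α : Type*} (G : List α) : GEvent → List α
  | .del i j => G.take (i - 1) ++ G.drop j
  | .dup i j p => G.take p ++ ((G.drop (i - 1)).take (j - i + 1)) ++ G.drop p

/-- Validity of an event on a genome: `del i j` requires `1 ≤ i ≤ j ≤ |G|`;
`dup i j p` requires `1 ≤ i ≤ j ≤ |G|` and `p ∈ {0,…,i−1} ∪ {j,…,|G|}`. -/
def GEvent.Valid {α : Type*} (G : List α) : GEvent → Prop
  | .del i j => 1 ≤ i ∧ i ≤ j ∧ j ≤ G.length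
  | .dup i j p => 1 ≤ i ∧ i ≤ j ∧ j ≤ G.length ∧ (p ≤ i - 1 ∨ (j ≤ p ∧ p ≤ G.length))

/-- `applyEvents G E` is `G⟨E⟩`, the genome obtained by successively applying
the events of `E` to `G`. -/
def applyEvents {α : Type*} (G : List α) : List GEvent → List α
  | [] => G
  | e :: E => applyEvents (applyEvent G e) E

/-- A sequence of events is valid on `G` if each event is valid on the genome
obtained by applying the previous events. -/
def ValidSeq {α : Type*} (G : List α) : List GEvent → Prop
  | [] => True
  | e :: E => e.Valid G ∧ ValidSeq (applyEvent G e) E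

/-- The copy-number profile of a genome: the number of occurrences of each character. -/
def cnp {α : Type*} [DecidableEq α] (G : List α) : α → ℕ := fun s => G.count s

/-- The Genome-to-CNP distance: the minimum length of a valid event sequence turning `G`
into a genome with CNP `c` (`⊤` if there is none). -/
noncomputable def dGCNP {α : Type*} [DecidableEq α] (G : List α) (c : α → ℕ) : ℕ∞ :=
  sInf { k : ℕ∞ | ∃ E : List GEvent,
    ValidSeq G E ∧ (E.length : ℕ∞) = k ∧ cnp (applyEvents G E) = c }

section Aux

variable {α : Type*}

/-- Position translation: number of elements satisfying `P` among the first `p`. -/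
private def fpos (P : α → Bool) (G : List α) (p : ℕ) : ℕ := (G.take p).countP P

private lemma fpos_def (P : α → Bool) (G : List α) (p : ℕ) :
    fpos P G p = (G.take p).countP P := rfl

private lemma fpos_mono (P : α → Bool) (G : List α) {p q : ℕ} (h : p ≤ q) :
    fpos P G p ≤ fpos P G q := by
  unfold fpos
  rw [← min_eq_left h, ← List.take_take]
  exact (List.take_sublist _ _).countP_le

private lemma fpos_le (P : α → Bool) (G : List α) (p : ℕ) :
    fpos P G p ≤ (G.filter P).length := by
  rw [← List.countP_eq_length_filter]
  exact (List.take_sublist _ _).countP_le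

private lemma filt_split (P : α → Bool) (G : List α) (p : ℕ) :
    G.filter P = (G.take p).filter P ++ (G.drop p).filter P := by
  rw [← List.filter_append, List.take_append_drop]

private lemma filt_take (P : α → Bool) (G : List α) (p : ℕ) :
    (G.filter P).take (fpos P G p) = (G.take p).filter P := by
  rw [fpos_def, List.countP_eq_length_filter, filt_split P G p, List.take_left]

private lemma filt_drop (P : α → Bool) (G : List α) (p : ℕ) :
    (G.filter P).drop (fpos P G p) = (G.drop p).filter P := by
  rw [fpos_def, List.countP_eq_length_filter, filt_split P G p, List.drop_left]

/-- countP of the middle segment. -/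
private lemma mid_countP (P : α → Bool) (G : List α) {i j : ℕ} (h1 : 1 ≤ i) (h2 : i ≤ j) :
    fpos P G (i-1) + fpos P (G.drop (i-1)) (j-i+1) = fpos P G j := by
  have hj : j = (i-1) + (j-i+1) := by omega
  simp only [fpos_def]
  conv_rhs => rw [hj, List.take_add, List.countP_append]

private lemma step (P : α → Bool) (G : List α) (e : GEvent) (he : e.Valid G) :
    (applyEvent G e).filter P = G.filter P ∨
    ∃ e', e'.Valid (G.filter P) ∧
      applyEvent (G.filter P) e' = (applyEvent G e).filter P := by
  cases e with
  | del i j =>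
    obtain ⟨h1, h2, h3⟩ := he
    have hab : fpos P G (i-1) ≤ fpos P G j := fpos_mono P G (by omega)
    by_cases hq : fpos P G (i-1) = fpos P G j
    · left
      show (G.take (i-1) ++ G.drop j).filter P = G.filter P
      rw [List.filter_append, ← filt_take, ← filt_drop, ← hq, List.take_append_drop]
    · right
      refine ⟨.del (fpos P G (i-1) + 1) (fpos P G j), ⟨by omega, by omega, fpos_le P G j⟩, ?_⟩
      show (G.filter P).take (fpos P G (i-1) + 1 - 1) ++ (G.filter P).drop (fpos P G j)
          = (G.take (i-1) ++ G.drop j).filter P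
      rw [Nat.add_sub_cancel, filt_take, filt_drop, List.filter_append]
  | dup i j p =>
    obtain ⟨h1, h2, h3, h4⟩ := he
    have hab : fpos P G (i-1) ≤ fpos P G j := fpos_mono P G (by omega)
    have hmid := mid_countP P G h1 h2
    by_cases hq : fpos P G (i-1) = fpos P G j
    · left
      show (G.take p ++ (G.drop (i-1)).take (j-i+1) ++ G.drop p).filter P = G.filter P
      have hz : ((G.drop (i-1)).take (j-i+1)).filter P = [] := by
        rw [← List.length_eq_zero_iff, ← List.countP_eq_length_filter, ← fpos_def]; omega
      rw [List.filter_append, List.filter_append, hz, List.append_nil,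
        ← filt_take, ← filt_drop, List.take_append_drop]
    · right
      refine ⟨.dup (fpos P G (i-1) + 1) (fpos P G j) (fpos P G p),
        ⟨by omega, by omega, fpos_le P G j, ?_⟩, ?_⟩
      · rcases h4 with h4 | ⟨h4, h5⟩
        · exact Or.inl (by have := fpos_mono P G h4; omega)
        · exact Or.inr ⟨fpos_mono P G h4, fpos_le P G p⟩
      · show (G.filter P).take (fpos P G p) ++
            ((G.filter P).drop (fpos P G (i-1) + 1 - 1)).take
              (fpos P G j - (fpos P G (i-1) + 1) + 1) ++
            (G.filter P).drop (fpos P G p)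
          = (G.take p ++ (G.drop (i-1)).take (j-i+1) ++ G.drop p).filter P
        have he1 : fpos P G j - (fpos P G (i-1) + 1) + 1
            = fpos P (G.drop (i-1)) (j-i+1) := by omega
        rw [Nat.add_sub_cancel, filt_take, filt_drop, filt_drop, he1,
          filt_take P (G.drop (i-1)) (j-i+1), List.filter_append, List.filter_append]

private lemma main_sim (P : α → Bool) (E : List GEvent) :
    ∀ G : List α, ValidSeq G E → ∃ E' : List GEvent,
      ValidSeq (G.filter P) E' ∧ E'.length ≤ E.length ∧
      applyEvents (G.filter P) E' = (applyEvents G E).filter P := by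
  induction E with
  | nil => exact fun G _ => ⟨[], trivial, le_refl _, rfl⟩
  | cons e E ih =>
    intro G hv
    obtain ⟨hev, hvs⟩ := hv
    obtain ⟨E', hv', hlen, happ⟩ := ih (applyEvent G e) hvs
    rcases step P G e hev with hsame | ⟨e', hval', heq⟩
    · rw [hsame] at hv' happ
      exact ⟨E', hv', Nat.le_succ_of_le hlen, happ⟩
    · refine ⟨e' :: E', ⟨hval', ?_⟩, Nat.succ_le_succ hlen, ?_⟩
      · rwa [heq]
      · show applyEvents (applyEvent (G.filter P) e') E' = _
        rwa [heq]

end Aux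


/-- Proposition 1 of the paper: for a genome `G`, a CNP `c`
and a character `s`, we have `d_GCNP(G − s, c − s) ≤ d_GCNP(G, c)`, where `G − s`
removes all occurrences of `s` from `G` and `c − s` sets the value of `c` at `s` to `0`.
(Since `d_GCNP` takes values in `ℕ∞`, this in particular says that if some event
sequence of length `k` transforms `G` into a genome with CNP `c`, then some event
sequence of length at most `k` transforms `G − s` into a genome with CNP `c − s`.) -/
theorem dGCNP_remove_char_le
    {α : Type*} [DecidableEq α] (G : List α) (c : α → ℕ) (s : α) :
    dGCNP (G.filter (· ≠ s)) (fun a => if a = s then 0 else c a) ≤ dGCNP G c := by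
  apply le_sInf
  rintro k ⟨E, hv, rfl, hc⟩
  obtain ⟨E', hv', hlen, happ⟩ := main_sim (fun a => decide (a ≠ s)) E G hv
  have hmem : (E'.length : ℕ∞) ∈ { k : ℕ∞ | ∃ E'' : List GEvent,
      ValidSeq (G.filter (· ≠ s)) E'' ∧ (E''.length : ℕ∞) = k ∧
      cnp (applyEvents (G.filter (· ≠ s)) E'') = fun a => if a = s then 0 else c a } := by
    refine ⟨E', hv', rfl, ?_⟩
    rw [happ]
    funext a
    simp only [cnp]
    by_cases ha : a = s
    · subst ha
      rw [if_pos rfl]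
      refine List.count_eq_zero.mpr fun hmem => ?_
      simpa using (List.mem_filter.mp hmem).2
    · rw [if_neg ha, List.count_filter (by simp [ha]), ← hc]
      rfl
  exact le_trans (sInf_le hmem) (by exact_mod_cast hlen)
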